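/- arXiv:1104.2477 — 3 statements merged into one kernel-verified Lean document; each statement's English description precedes it below -/
import Mathlib

section
/- For every natural number n ≥ 1, the number of non-crossing partitions of the set {1, 2, …, n} equals the n-th Catalan number C(n) = (1/(n+1))·binom(2n, n). -/
/-- A finpartition of `{0, …, n-1}` (representing `{1, …, n}`) is *non-crossing* if
there are no indices `a < b < c < d` such that some block contains both `a` and `c`
while a different block contains both `b` and `d`. -/
def Finpartition.NonCrossing {n : ℕ}
    (P : Finpartition (Finset.univ : Finset (Fin n))) : Prop :=
  ¬ ∃ a b c d : Fin n, a < b ∧ b < c ∧ c < d ∧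
      ∃ B ∈ P.parts, ∃ B' ∈ P.parts, B ≠ B' ∧
        a ∈ B ∧ c ∈ B ∧ b ∈ B' ∧ d ∈ B'

/-- `f` is the "min of block" map of a partition of `{0,…,n-1}`. -/
def MinMap (n : ℕ) (f : ℕ → ℕ) : Prop :=
  (∀ i, f i ≤ i) ∧ (∀ i, f (f i) = f i) ∧ (∀ i, n ≤ i → f i = 0)

def Crossed (n : ℕ) (f : ℕ → ℕ) : Prop :=
  ∃ a b c d : ℕ, a < b ∧ b < c ∧ c < d ∧ d < n ∧
    f a = f c ∧ f b = f d ∧ f a ≠ f b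

def NCF (n : ℕ) : Type := {f : ℕ → ℕ // MinMap n f ∧ ¬ Crossed n f}

lemma minmap_zero {n : ℕ} {f : ℕ → ℕ} (hf : MinMap n f) : f 0 = 0 :=
  Nat.le_zero.1 (hf.1 0)

lemma NCF.inj {n : ℕ} : Function.Injective
    (fun f : NCF n => (fun i : Fin n => (⟨f.1 i, lt_of_le_of_lt (f.2.1.1 i) i.2⟩ : Fin n))) := by
  rintro ⟨f, hf⟩ ⟨g, hg⟩ h
  refine Subtype.ext (funext fun i => ?_)
  show f i = g i
  rcases lt_or_ge i n with hi | hi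
  · exact congrArg (Fin.val) (congrFun h ⟨i, hi⟩)
  · rw [hf.1.2.2 i hi, hg.1.2.2 i hi]

noncomputable instance (n : ℕ) : Fintype (NCF n) :=
  Fintype.ofInjective _ NCF.inj

open Finset

lemma Finpartition.eq_of_part_eq {α : Type*} [DecidableEq α] {s : Finset α}
    {P Q : Finpartition s} (h : ∀ a ∈ s, P.part a = Q.part a) : P = Q := by
  ext B
  constructor
  · intro hB
    obtain ⟨a, ha⟩ := Finset.nonempty_of_ne_empty (fun (he : B = ∅) => P.bot_notMem (by rwa [he] at hB))
    have has : a ∈ s := Finset.mem_of_subset (P.le hB) ha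
    have : P.part a = B := P.part_eq_of_mem hB ha
    rw [← this, h a has]
    exact Q.part_mem.2 has
  · intro hB
    obtain ⟨a, ha⟩ := Finset.nonempty_of_ne_empty (fun (he : B = ∅) => Q.bot_notMem (by rwa [he] at hB))
    have has : a ∈ s := Finset.mem_of_subset (Q.le hB) ha
    have : Q.part a = B := Q.part_eq_of_mem hB ha
    rw [← this, ← h a has]
    exact P.part_mem.2 has

section E1
variable {n : ℕ} (P : Finpartition (Finset.univ : Finset (Fin n)))

/-- the min-of-block map of a partition -/
noncomputable def pmin (i : ℕ) : ℕ :=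
  if h : i < n then ((P.part ⟨i, h⟩).min' ⟨⟨i, h⟩, P.mem_part (mem_univ _)⟩ : Fin n).val else 0

lemma pmin_lt {a : Fin n} : pmin P a = ((P.part a).min' ⟨a, P.mem_part (mem_univ _)⟩ : Fin n).val := by
  simp [pmin, a.2]

lemma Finset.min'_congr {α : Type*} [LinearOrder α] {s t : Finset α} (h : s = t)
    (hs : s.Nonempty) (ht : t.Nonempty) : s.min' hs = t.min' ht := by subst h; rfl

lemma pmin_mem_part (a : Fin n) (h : pmin P a < n) : (⟨pmin P a, h⟩ : Fin n) ∈ P.part a := by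
  have he : (⟨pmin P a, h⟩ : Fin n) = (P.part a).min' ⟨a, P.mem_part (mem_univ _)⟩ :=
    Fin.ext (pmin_lt P)
  rw [he]
  exact (P.part a).min'_mem _

lemma pmin_le (i : ℕ) : pmin P i ≤ i := by
  unfold pmin
  split
  · next h => exact Finset.min'_le _ _ (P.mem_part (mem_univ _))
  · exact Nat.zero_le _

lemma pmin_eq_iff (a b : Fin n) : pmin P a = pmin P b ↔ P.part a = P.part b := by
  constructor
  · intro h
    have ha : pmin P a < n := lt_of_le_of_lt (pmin_le P a) a.2
    have hb : pmin P b < n := lt_of_le_of_lt (pmin_le P b) b.2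
    have m1 := pmin_mem_part P a ha
    have m2 := pmin_mem_part P b hb
    have he : (⟨pmin P (a:ℕ), ha⟩ : Fin n) = ⟨pmin P (b:ℕ), hb⟩ := Fin.ext h
    rw [he] at m1
    exact P.eq_of_mem_parts (P.part_mem.2 (mem_univ _)) (P.part_mem.2 (mem_univ _)) m1 m2
  · intro h
    rw [pmin_lt, pmin_lt]
    exact congrArg Fin.val (Finset.min'_congr h _ _)

lemma pmin_minmap : MinMap n (pmin P) := by
  refine ⟨pmin_le P, fun i => ?_, fun i hi => by simp [pmin, Nat.not_lt.2 hi]⟩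
  rcases lt_or_ge i n with hi | hi
  · have ha : pmin P (⟨i, hi⟩ : Fin n) < n := lt_of_le_of_lt (pmin_le P _) hi
    have : pmin P i = pmin P (⟨i, hi⟩ : Fin n) := rfl
    rw [this, (pmin_eq_iff P ⟨pmin P (⟨i, hi⟩ : Fin n), ha⟩ ⟨i, hi⟩).2]
    exact P.part_eq_of_mem (P.part_mem.2 (mem_univ _)) (pmin_mem_part P _ ha)
  · have h0 : pmin P i = 0 := by simp [pmin, Nat.not_lt.2 hi]
    rw [h0]
    exact Nat.le_zero.1 (pmin_le P 0)

lemma pmin_nc (hP : P.NonCrossing) : ¬ Crossed n (pmin P) := by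
  rintro ⟨a, b, c, d, hab, hbc, hcd, hdn, hac, hbd, hne⟩
  have hcn : c < n := hcd.trans hdn
  have hbn : b < n := hbc.trans hcn
  have han : a < n := hab.trans hbn
  refine hP ⟨⟨a, han⟩, ⟨b, hbn⟩, ⟨c, hcn⟩, ⟨d, hdn⟩, hab, hbc, hcd,
    P.part ⟨a, han⟩, P.part_mem.2 (mem_univ _), P.part ⟨b, hbn⟩, P.part_mem.2 (mem_univ _), ?_,
    P.mem_part (mem_univ _), ?_, P.mem_part (mem_univ _), ?_⟩
  · intro h
    exact hne ((pmin_eq_iff P _ _).2 h)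
  · exact ((pmin_eq_iff P ⟨a, han⟩ ⟨c, hcn⟩).1 hac) ▸ P.mem_part (mem_univ _)
  · exact ((pmin_eq_iff P ⟨b, hbn⟩ ⟨d, hdn⟩).1 hbd) ▸ P.mem_part (mem_univ _)

variable {f : ℕ → ℕ}

/-- the setoid on `Fin n` induced by `f` -/
def fSetoid (n : ℕ) (f : ℕ → ℕ) : Setoid (Fin n) :=
  ⟨fun a b => f a = f b, ⟨fun _ => rfl, Eq.symm, Eq.trans⟩⟩

instance (n : ℕ) (f : ℕ → ℕ) : DecidableRel (fSetoid n f).r :=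
  fun _ _ => Nat.decEq _ _

lemma mem_part_fSetoid {a b : Fin n} :
    b ∈ (Finpartition.ofSetoid (fSetoid n f)).part a ↔ f a = f b :=
  Finpartition.mem_part_ofSetoid_iff_rel

lemma ofSetoid_nc (hf : ¬ Crossed n f) :
    (Finpartition.ofSetoid (fSetoid n f)).NonCrossing := by
  rintro ⟨a, b, c, d, hab, hbc, hcd, B, hB, B', hB', hne, haB, hcB, hbB', hdB'⟩
  set Q := Finpartition.ofSetoid (fSetoid n f)
  have e1 : Q.part a = B := Q.part_eq_of_mem hB haB
  have e2 : Q.part b = B' := Q.part_eq_of_mem hB' hbB'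
  refine hf ⟨a, b, c, d, hab, hbc, hcd, d.2, ?_, ?_, ?_⟩
  · exact mem_part_fSetoid.1 (e1 ▸ hcB)
  · exact mem_part_fSetoid.1 (e2 ▸ hdB')
  · intro h
    have : b ∈ Q.part a := mem_part_fSetoid.2 h
    have : Q.part b = Q.part a :=
      (Q.mem_part_iff_part_eq_part (mem_univ _) (mem_univ _)).1 this
    exact hne (e1 ▸ e2 ▸ this.symm)

end E1

noncomputable def E1 (n : ℕ) :
    {P : Finpartition (Finset.univ : Finset (Fin n)) // P.NonCrossing} ≃ NCF n where
  toFun P := ⟨pmin P.1, pmin_minmap P.1, pmin_nc P.1 P.2⟩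
  invFun f := ⟨Finpartition.ofSetoid (fSetoid n f.1), ofSetoid_nc f.2.2⟩
  left_inv := by
    rintro ⟨P, hP⟩
    refine Subtype.ext (Finpartition.eq_of_part_eq fun a _ => ?_)
    ext b
    rw [mem_part_fSetoid, P.mem_part_iff_part_eq_part (mem_univ _) (mem_univ _),
      pmin_eq_iff]
    exact eq_comm
  right_inv := by
    rintro ⟨f, hmin, hnc⟩
    refine Subtype.ext (funext fun i => ?_)
    show pmin _ i = f i
    rcases lt_or_ge i n with hi | hi
    · set Q := Finpartition.ofSetoid (fSetoid n f) with hQ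
      have hfi : f i < n := lt_of_le_of_lt (hmin.1 i) hi
      have h1 : (⟨f i, hfi⟩ : Fin n) ∈ Q.part ⟨i, hi⟩ :=
        mem_part_fSetoid.2 (hmin.2.1 i).symm
      have hlt : pmin Q i = ((Q.part ⟨i, hi⟩).min' ⟨⟨i, hi⟩, Q.mem_part (mem_univ _)⟩ : Fin n).val :=
        pmin_lt (a := ⟨i, hi⟩) Q
      rw [hlt]
      apply le_antisymm
      · exact Finset.min'_le _ _ h1
      · have hm := (Q.part ⟨i, hi⟩).min'_mem ⟨⟨i, hi⟩, Q.mem_part (mem_univ _)⟩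
        have : f i = f ((Q.part ⟨i, hi⟩).min' _ : Fin n) := mem_part_fSetoid.1 hm
        calc f i = f _ := this
        _ ≤ _ := hmin.1 _
    · rw [hmin.2.2 i hi]
      simp [pmin, Nat.not_lt.2 hi]

section E2
variable (n : ℕ)

/-- `jOf f` : the smallest positive index in the block of `0`, or `n+1` if none. -/
def jOf (f : ℕ → ℕ) : ℕ :=
  Nat.find (⟨n+1, Or.inr rfl⟩ : ∃ i, (0 < i ∧ f i = 0) ∨ i = n + 1)

variable {f : ℕ → ℕ}

lemma jOf_pos : 0 < jOf n f := by
  rcases Nat.eq_zero_or_pos (jOf n f) with h | h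
  · have := Nat.find_spec (⟨n+1, Or.inr rfl⟩ : ∃ i, (0 < i ∧ f i = 0) ∨ i = n + 1)
    rw [show Nat.find _ = jOf n f from rfl, h] at this
    omega
  · exact h

lemma jOf_le : jOf n f ≤ n + 1 :=
  Nat.find_le (Or.inr rfl)

lemma jOf_spec (h : jOf n f ≤ n) : f (jOf n f) = 0 := by
  have := Nat.find_spec (⟨n+1, Or.inr rfl⟩ : ∃ i, (0 < i ∧ f i = 0) ∨ i = n + 1)
  rw [show Nat.find _ = jOf n f from rfl] at this
  rcases this with ⟨_, h0⟩ | h1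
  · exact h0
  · omega

lemma jOf_min {i : ℕ} (h0 : 0 < i) (hi : i < jOf n f) : f i ≠ 0 := by
  have := Nat.find_min (⟨n+1, Or.inr rfl⟩ : ∃ i, (0 < i ∧ f i = 0) ∨ i = n + 1) hi
  intro h
  exact this (Or.inl ⟨h0, h⟩)

/-- Key structural fact: every nonzero value of `f` at `i ≥ jOf` exceeds `jOf`. -/
lemma claimA (hm : MinMap (n+1) f) (hnc : ¬ Crossed (n+1) f) {i : ℕ}
    (hji : jOf n f ≤ i) (hin : i ≤ n) (hfi : f i ≠ 0) : jOf n f < f i := by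
  have hfle : f i ≤ i := hm.1 i
  have hidem := hm.2.1 i
  by_contra hle
  push_neg at hle
  rcases eq_or_lt_of_le hji with hji' | hji'
  · exact hfi (hji' ▸ jOf_spec n (by omega))
  · have hjn : jOf n f ≤ n := by omega
    have hfj : f (jOf n f) = 0 := jOf_spec n hjn
    rcases eq_or_lt_of_le hle with he | hlt
    · have h2 : f (f i) = 0 := by rw [he]; exact hfj
      rw [hidem] at h2
      exact hfi h2
    · apply hnc
      refine ⟨0, f i, jOf n f, i, Nat.pos_of_ne_zero hfi, hlt, hji', by omega, ?_, ?_, ?_⟩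
      · rw [minmap_zero hm, hfj]
      · rw [hidem]
      · rw [minmap_zero hm, hidem]
        exact fun hh => hfi hh.symm

/-- left restriction -/
def gOf (f : ℕ → ℕ) (j : ℕ) : ℕ → ℕ := fun i => if i + 1 < j then f (i + 1) - 1 else 0

/-- right restriction -/
def hOf (f : ℕ → ℕ) (j m : ℕ) : ℕ → ℕ :=
  fun i => if i < m ∧ f (i + j) ≠ 0 then f (i + j) - j else 0

section forward

lemma gOf_val {j i : ℕ} (h : i + 1 < j) : gOf f j i = f (i + 1) - 1 := by
  unfold gOf; simp [h]

lemma gOf_val0 {j i : ℕ} (h : ¬ i + 1 < j) : gOf f j i = 0 := by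
  unfold gOf; simp [h]

lemma gOf_minmap (hm : MinMap (n+1) f) : MinMap (jOf n f - 1) (gOf f (jOf n f)) := by
  have g0 : gOf f (jOf n f) 0 = 0 := by
    by_cases h1 : 0 + 1 < jOf n f
    · rw [gOf_val h1]
      have := jOf_min n (i := 0 + 1) (Nat.succ_pos 0) h1
      have := hm.1 (0 + 1)
      omega
    · exact gOf_val0 h1
  refine ⟨fun i => ?_, fun i => ?_, fun i hi => ?_⟩
  · by_cases h1 : i + 1 < jOf n f
    · rw [gOf_val h1]
      have := hm.1 (i+1)
      omega
    · rw [gOf_val0 h1]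
      exact Nat.zero_le _
  · by_cases h1 : i + 1 < jOf n f
    · rw [gOf_val h1]
      have hne := jOf_min n (i := i+1) (Nat.succ_pos _) h1
      have hle := hm.1 (i+1)
      have hv : f (i+1) - 1 + 1 = f (i+1) := by omega
      have hvlt : f (i+1) - 1 + 1 < jOf n f := by omega
      rw [gOf_val hvlt, hv, hm.2.1 (i+1)]
    · rw [gOf_val0 h1]
      exact g0
  · exact gOf_val0 (by omega)

lemma gOf_nc (hnc : ¬ Crossed (n+1) f) : ¬ Crossed (jOf n f - 1) (gOf f (jOf n f)) := by
  rintro ⟨a, b, c, d, hab, hbc, hcd, hdk, e1, e2, hne⟩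
  have hjn : jOf n f ≤ n + 1 := jOf_le n
  have key : ∀ x, x ≤ d → gOf f (jOf n f) x = f (x+1) - 1 ∧ f (x+1) ≠ 0 := by
    intro x hx
    have hxj : x + 1 < jOf n f := by omega
    exact ⟨gOf_val hxj, jOf_min n (Nat.succ_pos _) hxj⟩
  obtain ⟨ea, fa⟩ := key a (by omega)
  obtain ⟨eb, fb⟩ := key b (by omega)
  obtain ⟨ec, fc⟩ := key c (by omega)
  obtain ⟨ed, fd⟩ := key d le_rfl
  refine hnc ⟨a+1, b+1, c+1, d+1, by omega, by omega, by omega, by omega, ?_, ?_, ?_⟩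
  · rw [ea, ec] at e1; omega
  · rw [eb, ed] at e2; omega
  · rw [ea, eb] at hne; omega

lemma hOf_val0 {j m i : ℕ} (h : ¬ (i < m ∧ f (i + j) ≠ 0)) : hOf f j m i = 0 := by
  unfold hOf; simp only [ite_eq_right_iff]; intro h'; exact absurd h' h

lemma hOf_val (hm : MinMap (n+1) f) (hnc : ¬ Crossed (n+1) f) {i : ℕ}
    (hi : i < n + 1 - jOf n f) (hfi : f (i + jOf n f) ≠ 0) :
    jOf n f < f (i + jOf n f) ∧
      hOf f (jOf n f) (n + 1 - jOf n f) i = f (i + jOf n f) - jOf n f := by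
  have hj1 : 0 < jOf n f := jOf_pos n
  have h1 : jOf n f ≤ i + jOf n f := Nat.le_add_left _ _
  have h2 : i + jOf n f ≤ n := by omega
  refine ⟨claimA n hm hnc h1 h2 hfi, ?_⟩
  unfold hOf
  simp [hi, hfi]

lemma hOf_eq_iff (hm : MinMap (n+1) f) (hnc : ¬ Crossed (n+1) f) {x y : ℕ}
    (hx : x < n + 1 - jOf n f) (hy : y < n + 1 - jOf n f) :
    hOf f (jOf n f) (n + 1 - jOf n f) x = hOf f (jOf n f) (n + 1 - jOf n f) y ↔
      f (x + jOf n f) = f (y + jOf n f) := by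
  by_cases h1 : f (x + jOf n f) = 0 <;> by_cases h2 : f (y + jOf n f) = 0
  · have e1 : hOf f (jOf n f) (n+1-jOf n f) x = 0 := hOf_val0 (by simp [h1])
    have e2 : hOf f (jOf n f) (n+1-jOf n f) y = 0 := hOf_val0 (by simp [h2])
    rw [e1, e2, h1, h2]
  · obtain ⟨hgt, e2⟩ := hOf_val n hm hnc hy h2
    have e1 : hOf f (jOf n f) (n+1-jOf n f) x = 0 := hOf_val0 (by simp [h1])
    rw [e1, e2, h1]
    constructor <;> intro h <;> omega
  · obtain ⟨hgt, e1⟩ := hOf_val n hm hnc hx h1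
    have e2 : hOf f (jOf n f) (n+1-jOf n f) y = 0 := hOf_val0 (by simp [h2])
    rw [e1, e2, h2]
    constructor <;> intro h <;> omega
  · obtain ⟨hgt1, e1⟩ := hOf_val n hm hnc hx h1
    obtain ⟨hgt2, e2⟩ := hOf_val n hm hnc hy h2
    rw [e1, e2]
    constructor <;> intro h <;> omega

lemma hOf_minmap (hm : MinMap (n+1) f) (hnc : ¬ Crossed (n+1) f) :
    MinMap (n + 1 - jOf n f) (hOf f (jOf n f) (n + 1 - jOf n f)) := by
  have h0 : hOf f (jOf n f) (n + 1 - jOf n f) 0 = 0 := by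
    apply hOf_val0
    rintro ⟨hlt, hne⟩
    have hjn : jOf n f ≤ n := by omega
    exact hne (by simpa using jOf_spec n hjn)
  refine ⟨fun i => ?_, fun i => ?_, fun i hi => ?_⟩
  · by_cases h : i < n + 1 - jOf n f ∧ f (i + jOf n f) ≠ 0
    · obtain ⟨_, e⟩ := hOf_val n hm hnc h.1 h.2
      rw [e]
      have := hm.1 (i + jOf n f)
      omega
    · rw [hOf_val0 h]
      exact Nat.zero_le _
  · by_cases h : i < n + 1 - jOf n f ∧ f (i + jOf n f) ≠ 0
    · obtain ⟨hgt, e⟩ := hOf_val n hm hnc h.1 h.2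
      rw [e]
      have hle := hm.1 (i + jOf n f)
      have hvm : f (i + jOf n f) - jOf n f < n + 1 - jOf n f := by omega
      have hvj : f (i + jOf n f) - jOf n f + jOf n f = f (i + jOf n f) := by omega
      have hfv : f (f (i + jOf n f) - jOf n f + jOf n f) = f (i + jOf n f) := by
        rw [hvj]; exact hm.2.1 (i + jOf n f)
      have hfv0 : f (f (i + jOf n f) - jOf n f + jOf n f) ≠ 0 := by rw [hfv]; exact h.2
      obtain ⟨_, e2⟩ := hOf_val n hm hnc hvm hfv0
      rw [e2, hfv]
    · rw [hOf_val0 h, h0]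
  · exact hOf_val0 (by omega)

lemma hOf_nc (hm : MinMap (n+1) f) (hnc : ¬ Crossed (n+1) f) :
    ¬ Crossed (n + 1 - jOf n f) (hOf f (jOf n f) (n + 1 - jOf n f)) := by
  rintro ⟨a, b, c, d, hab, hbc, hcd, hdm, e1, e2, hne⟩
  have ha : a < n + 1 - jOf n f := by omega
  have hb : b < n + 1 - jOf n f := by omega
  have hc : c < n + 1 - jOf n f := by omega
  have hj1 : 0 < jOf n f := jOf_pos n
  refine hnc ⟨a + jOf n f, b + jOf n f, c + jOf n f, d + jOf n f,
    by omega, by omega, by omega, by omega, ?_, ?_, ?_⟩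
  · exact (hOf_eq_iff n hm hnc ha hc).1 e1
  · exact (hOf_eq_iff n hm hnc hb hdm).1 e2
  · intro h
    exact hne ((hOf_eq_iff n hm hnc ha hb).2 h)

end forward

/-- glue a partition of `{0,…,k-1}` and one of `{0,…,n-k-1}` into one of `{0,…,n}` -/
def fOf (n k : ℕ) (g h : ℕ → ℕ) : ℕ → ℕ := fun i =>
  if i = 0 then 0
  else if i < k + 1 then g (i - 1) + 1
  else if i ≤ n ∧ h (i - (k+1)) ≠ 0 then h (i - (k+1)) + (k+1)
  else 0

section inverse
variable {k : ℕ} {g h : ℕ → ℕ}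

lemma fOf_zero : fOf n k g h 0 = 0 := rfl

lemma fOf_left {i : ℕ} (h0 : 0 < i) (hik : i < k + 1) :
    fOf n k g h i = g (i - 1) + 1 := by
  unfold fOf
  simp [Nat.pos_iff_ne_zero.1 h0, hik]

lemma fOf_right {i : ℕ} (hk : k + 1 ≤ i) (hin : i ≤ n) (hne : h (i - (k+1)) ≠ 0) :
    fOf n k g h i = h (i - (k+1)) + (k + 1) := by
  unfold fOf
  have h0 : i ≠ 0 := by omega
  have h1 : ¬ i < k + 1 := by omega
  simp [h0, h1, hin, hne]

lemma fOf_right0 {i : ℕ} (hk : k + 1 ≤ i) (hz : h (i - (k+1)) = 0 ∨ n < i) :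
    fOf n k g h i = 0 := by
  unfold fOf
  have h0 : i ≠ 0 := by omega
  have h1 : ¬ i < k + 1 := by omega
  rcases hz with hz | hz
  · simp [h0, h1, hz]
  · have h2 : ¬ (i ≤ n ∧ h (i - (k+1)) ≠ 0) := fun hc => absurd hc.1 (by omega)
    simp [h0, h1, h2]

lemma fOf_cases (hg : MinMap k g) (hh : MinMap (n - k) h) (i : ℕ) :
    fOf n k g h i = 0 ∨
    (0 < i ∧ i < k + 1 ∧ 0 < fOf n k g h i ∧ fOf n k g h i < k + 1 ∧
      fOf n k g h i = g (i - 1) + 1) ∨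
    (k + 1 < i ∧ i ≤ n ∧ k + 1 < fOf n k g h i ∧
      fOf n k g h i = h (i - (k+1)) + (k + 1)) := by
  rcases Nat.eq_zero_or_pos i with h0 | h0
  · subst h0; exact Or.inl (fOf_zero n)
  by_cases hik : i < k + 1
  · refine Or.inr (Or.inl ⟨h0, hik, ?_⟩)
    rw [fOf_left n h0 hik]
    have := hg.1 (i - 1)
    omega
  · by_cases hin : i ≤ n
    · by_cases hz : h (i - (k+1)) = 0
      · exact Or.inl (fOf_right0 n (by omega) (Or.inl hz))
      · refine Or.inr (Or.inr ⟨?_, hin, ?_, fOf_right n (by omega) hin hz⟩)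
        · have := hh.1 (i - (k+1))
          omega
        · rw [fOf_right n (by omega) hin hz]
          omega
    · exact Or.inl (fOf_right0 n (by omega) (Or.inr (by omega)))

lemma fOf_left_ne {i : ℕ} (h0 : 0 < i) (hik : i < k + 1) : fOf n k g h i ≠ 0 := by
  rw [fOf_left n h0 hik]; omega

lemma fOf_zero_right {i : ℕ} (hk : k + 1 ≤ i) (hin : i ≤ n)
    (hz : fOf n k g h i = 0) : h (i - (k+1)) = 0 := by
  by_contra hne
  rw [fOf_right n hk hin hne] at hz
  omega

lemma fOf_minmap (hk : k ≤ n) (hg : MinMap k g) (hh : MinMap (n - k) h) :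
    MinMap (n + 1) (fOf n k g h) := by
  refine ⟨fun i => ?_, fun i => ?_, fun i hi => ?_⟩
  · rcases fOf_cases n hg hh i with h0 | ⟨h1, h2, h3, h4, h5⟩ | ⟨h1, h2, h3, h5⟩
    · omega
    · rw [h5]; have := hg.1 (i - 1); omega
    · rw [h5]; have := hh.1 (i - (k+1)); omega
  · rcases fOf_cases n hg hh i with h0 | ⟨h1, h2, h3, h4, h5⟩ | ⟨h1, h2, h3, h5⟩
    · rw [h0]; exact fOf_zero n
    · have hgle := hg.1 (i - 1)
      rw [h5, fOf_left n (by omega) (by omega)]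
      have e : g (i - 1) + 1 - 1 = g (i - 1) := by omega
      rw [e, hg.2.1 (i - 1)]
    · have hhle := hh.1 (i - (k+1))
      have hne : h (h (i - (k+1)) + (k+1) - (k+1)) ≠ 0 := by
        have e : h (i - (k+1)) + (k+1) - (k+1) = h (i - (k+1)) := by omega
        rw [e, hh.2.1 (i - (k+1))]
        omega
      rw [h5, fOf_right n (by omega) (by omega) hne]
      have e : h (i - (k+1)) + (k+1) - (k+1) = h (i - (k+1)) := by omega
      rw [e, hh.2.1 (i - (k+1))]
  · exact fOf_right0 n (by omega) (Or.inr (by omega))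

lemma fOf_nc (hk : k ≤ n) (hg : MinMap k g) (hgn : ¬ Crossed k g)
    (hh : MinMap (n - k) h) (hhn : ¬ Crossed (n - k) h) :
    ¬ Crossed (n + 1) (fOf n k g h) := by
  rintro ⟨a, b, c, d, hab, hbc, hcd, hdn, e1, e2, hne⟩
  rcases fOf_cases n hg hh a with ha0 | ⟨ha1, ha2, ha3, ha4, ha5⟩ | ⟨ha1, ha2, ha3, ha5⟩ <;>
    rcases fOf_cases n hg hh c with hc0 | ⟨hc1, hc2, hc3, hc4, hc5⟩ | ⟨hc1, hc2, hc3, hc5⟩ <;>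
    rcases fOf_cases n hg hh b with hb0 | ⟨hb1, hb2, hb3, hb4, hb5⟩ | ⟨hb1, hb2, hb3, hb5⟩ <;>
    rcases fOf_cases n hg hh d with hd0 | ⟨hd1, hd2, hd3, hd4, hd5⟩ | ⟨hd1, hd2, hd3, hd5⟩ <;>
    try omega
  · -- a,c zero; b,d left : c is in the left region, contradiction
    exact fOf_left_ne n (g := g) (h := h) (by omega) (by omega) hc0
  · -- a,c zero; b,d right : h-crossing using 0
    have hcz : h (c - (k+1)) = 0 := fOf_zero_right n (by omega) (by omega) hc0
    refine hhn ⟨0, b - (k+1), c - (k+1), d - (k+1), by omega, by omega, by omega, by omega,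
      ?_, by omega, ?_⟩
    · rw [minmap_zero hh, hcz]
    · rw [minmap_zero hh]; omega
  · -- a,c left; b,d zero : b in left region, contradiction
    exact fOf_left_ne n (g := g) (h := h) (by omega) (by omega) hb0
  · -- a,c left; b,d left : g-crossing
    exact hgn ⟨a - 1, b - 1, c - 1, d - 1, by omega, by omega, by omega, by omega,
      by omega, by omega, by omega⟩
  · -- a,c right; b,d zero : h-crossing
    have hbz : h (b - (k+1)) = 0 := fOf_zero_right n (by omega) (by omega) hb0
    have hdz : h (d - (k+1)) = 0 := fOf_zero_right n (by omega) (by omega) hd0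
    exact hhn ⟨a - (k+1), b - (k+1), c - (k+1), d - (k+1), by omega, by omega, by omega,
      by omega, by omega, by omega, by omega⟩
  · -- a,c right; b,d right : h-crossing
    exact hhn ⟨a - (k+1), b - (k+1), c - (k+1), d - (k+1), by omega, by omega, by omega,
      by omega, by omega, by omega, by omega⟩

end inverse

section roundtrip
variable {k : ℕ} {g h : ℕ → ℕ}

lemma jOf_fOf (hk : k ≤ n) (hg : MinMap k g) (hh : MinMap (n - k) h) :
    jOf n (fOf n k g h) = k + 1 := by
  unfold jOf
  rw [Nat.find_eq_iff]
  constructor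
  · rcases eq_or_lt_of_le hk with he | hlt
    · exact Or.inr (by omega)
    · refine Or.inl ⟨Nat.succ_pos _, ?_⟩
      refine fOf_right0 n le_rfl (Or.inl ?_)
      have e : (k+1) - (k+1) = 0 := by omega
      rw [e, minmap_zero hh]
  · intro i hi
    rintro (⟨hpos, hzero⟩ | hne)
    · exact fOf_left_ne n (g := g) (h := h) hpos (by omega) hzero
    · omega

lemma gOf_fOf (hk : k ≤ n) (hg : MinMap k g) (hh : MinMap (n - k) h) :
    gOf (fOf n k g h) (k + 1) = g := by
  funext i
  by_cases hik : i + 1 < k + 1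
  · rw [gOf_val hik, fOf_left n (Nat.succ_pos _) (by omega)]
    simp
  · rw [gOf_val0 hik]
    exact (hg.2.2 i (by omega)).symm

lemma hOf_fOf (hk : k ≤ n) (hg : MinMap k g) (hh : MinMap (n - k) h) :
    hOf (fOf n k g h) (k + 1) (n + 1 - (k + 1)) = h := by
  funext i
  have em : n + 1 - (k + 1) = n - k := by omega
  by_cases him : i < n + 1 - (k + 1)
  · have ei : i + (k + 1) - (k + 1) = i := by omega
    by_cases hz : h i = 0
    · have e0 : fOf n k g h (i + (k + 1)) = 0 :=
        fOf_right0 n (by omega) (Or.inl (by rw [ei, hz]))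
      rw [hOf_val0 (by rw [e0]; simp), hz]
    · have e0 : fOf n k g h (i + (k + 1)) = h i + (k + 1) := by
        rw [fOf_right n (by omega) (by omega) (by rw [ei]; exact hz), ei]
      unfold hOf
      rw [if_pos ⟨him, by rw [e0]; omega⟩, e0]
      omega
  · rw [hOf_val0 (fun hc => him hc.1)]
    exact (hh.2.2 i (by omega)).symm

lemma fOf_gOf_hOf (hm : MinMap (n+1) f) (hnc : ¬ Crossed (n+1) f) :
    fOf n (jOf n f - 1) (gOf f (jOf n f)) (hOf f (jOf n f) (n + 1 - jOf n f)) = f := by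
  have hj0 : 0 < jOf n f := jOf_pos n
  have hjle : jOf n f ≤ n + 1 := jOf_le n
  have ej : jOf n f - 1 + 1 = jOf n f := by omega
  funext i
  rcases Nat.eq_zero_or_pos i with h0 | h0
  · subst h0
    rw [fOf_zero n, minmap_zero hm]
  by_cases hij : i < jOf n f
  · rw [fOf_left n h0 (by omega), gOf_val (by omega : i - 1 + 1 < jOf n f)]
    have e : i - 1 + 1 = i := by omega
    rw [e]
    have := jOf_min n h0 hij
    omega
  · by_cases hin : i ≤ n
    · have ei : i - jOf n f + jOf n f = i := by omega
      by_cases hz : f i = 0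
      · refine Eq.trans (fOf_right0 n (by omega) (Or.inl ?_)) hz.symm
        refine hOf_val0 ?_
        rw [ej, ei]
        exact fun hc => hc.2 hz

      · have hgt : jOf n f < f i := claimA n hm hnc (by omega) hin hz
        have hval : hOf f (jOf n f) (n + 1 - jOf n f) (i - (jOf n f - 1 + 1)) =
            f i - jOf n f := by
          have := hOf_val n hm hnc (i := i - (jOf n f - 1 + 1)) (by omega)
            (by rw [ej]; rw [ei]; exact hz)
          rw [ej] at this ⊢
          rw [ei] at this
          exact this.2
        rw [fOf_right n (by omega) hin (by rw [hval]; omega), hval]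
        omega
    · rw [fOf_right0 n (by omega) (Or.inr (by omega))]
      exact (hm.2.2 i (by omega)).symm

end roundtrip

/-- the property carried by the two glued functions -/
def Pairs (n k : ℕ) (p : (ℕ → ℕ) × (ℕ → ℕ)) : Prop :=
  (MinMap k p.1 ∧ ¬ Crossed k p.1) ∧ (MinMap (n - k) p.2 ∧ ¬ Crossed (n - k) p.2)

end E2

noncomputable def E2 (n : ℕ) :
    NCF (n+1) ≃ Σ k : Fin (n+1), {p : (ℕ → ℕ) × (ℕ → ℕ) // Pairs n k p} where
  toFun F :=
    ⟨⟨jOf n F.1 - 1, by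
        have := jOf_le n (f := F.1); have := jOf_pos n (f := F.1); omega⟩,
     ⟨(gOf F.1 (jOf n F.1), hOf F.1 (jOf n F.1) (n + 1 - jOf n F.1)),
      ⟨⟨gOf_minmap n F.2.1, gOf_nc n F.2.2⟩, by
        show MinMap (n - (jOf n F.1 - 1)) _ ∧ ¬ Crossed (n - (jOf n F.1 - 1)) _
        have e : n - (jOf n F.1 - 1) = n + 1 - jOf n F.1 := by
          have := jOf_le n (f := F.1); have := jOf_pos n (f := F.1); omega
        rw [e]
        exact ⟨hOf_minmap n F.2.1 F.2.2, hOf_nc n F.2.1 F.2.2⟩⟩⟩⟩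
  invFun x :=
    ⟨fOf n x.1 x.2.1.1 x.2.1.2,
     fOf_minmap n (Fin.is_le x.1) x.2.2.1.1 x.2.2.2.1,
     fOf_nc n (Fin.is_le x.1) x.2.2.1.1 x.2.2.1.2 x.2.2.2.1 x.2.2.2.2⟩
  left_inv F := Subtype.ext (fOf_gOf_hOf n F.2.1 F.2.2)
  right_inv := by
    rintro ⟨⟨k, hkn⟩, ⟨⟨g, h⟩, ⟨⟨hg, hgn⟩, ⟨hh, hhn⟩⟩⟩⟩
    have hk : k ≤ n := by omega
    have hj : jOf n (fOf n k g h) = k + 1 := jOf_fOf n hk hg hh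
    refine Sigma.ext (by simp [hj]) ?_
    refine (Subtype.heq_iff_coe_eq ?_).2 ?_
    · intro p
      show Pairs n (jOf n (fOf n k g h) - 1) p ↔ Pairs n k p
      rw [hj]
      simp
    · show (gOf (fOf n k g h) (jOf n (fOf n k g h)),
          hOf (fOf n k g h) (jOf n (fOf n k g h)) (n + 1 - jOf n (fOf n k g h))) = (g, h)
      rw [hj]
      exact Prod.ext (gOf_fOf n hk hg hh) (hOf_fOf n hk hg hh)

def pairsEquiv (n k : ℕ) :
    {p : (ℕ → ℕ) × (ℕ → ℕ) // Pairs n k p} ≃ NCF k × NCF (n - k) :=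
  Equiv.subtypeProdEquivProd (p := fun f => MinMap k f ∧ ¬ Crossed k f)
    (q := fun f => MinMap (n - k) f ∧ ¬ Crossed (n - k) f)

lemma card_NCF_succ (n : ℕ) :
    Nat.card (NCF (n+1)) = ∑ k : Fin (n+1), Nat.card (NCF k) * Nat.card (NCF (n - k)) := by
  rw [Nat.card_congr ((E2 n).trans (Equiv.sigmaCongrRight fun k => pairsEquiv n k)),
    Nat.card_eq_fintype_card, Fintype.card_sigma]
  simp [Fintype.card_prod, Nat.card_eq_fintype_card]

instance : Unique (NCF 0) where
  default := ⟨fun _ => 0, ⟨fun i => Nat.zero_le i, fun _ => rfl, fun _ _ => rfl⟩,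
    by rintro ⟨a, b, c, d, _, _, _, hd, _⟩; omega⟩
  uniq f := Subtype.ext (funext fun i => f.2.1.2.2 i (Nat.zero_le i))

lemma card_NCF (n : ℕ) : Nat.card (NCF n) = catalan n := by
  induction n using Nat.strong_induction_on with
  | _ n ih =>
    match n, ih with
    | 0, _ => simp [Nat.card_unique]
    | (m+1), ih =>
      rw [card_NCF_succ, catalan_succ]
      refine Finset.sum_congr rfl fun k _ => ?_
      rw [ih k (by omega), ih (m - ↑k) (by omega)]

/-- The number of non-crossing partitions of an `n`-element cycle of points equals
the `n`-th Catalan number. -/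
theorem card_noncrossing_partitions_eq_catalan (n : ℕ) (hn : 1 ≤ n) :
    Nat.card {P : Finpartition (Finset.univ : Finset (Fin n)) // P.NonCrossing} =
      catalan n := by
  rw [Nat.card_congr (E1 n)]
  exact card_NCF n
end

section
/- For every real number x with 0 < x < 1/4, the series ∑_{n≥0} C(n)·xⁿ of Catalan numbers converges and equals (1 − √(1 − 4x))/(2x). -/
open Finset

lemma catalan_le_four_pow (n : ℕ) : catalan n ≤ 4 ^ n := by
  have h1 : catalan n ≤ n.centralBinom := by
    calc catalan n ≤ (n + 1) * catalan n := Nat.le_mul_of_pos_left _ n.succ_pos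
    _ = n.centralBinom := succ_mul_catalan_eq_centralBinom n
  have h2 : n.centralBinom ≤ 4 ^ n := by
    rw [Nat.centralBinom_eq_two_mul_choose]
    calc (2 * n).choose n ≤ ∑ m ∈ range (2 * n + 1), (2 * n).choose m := by
          apply Finset.single_le_sum (f := fun m => (2 * n).choose m)
          · intro i _; exact Nat.zero_le _
          · simp; omega
      _ = 2 ^ (2 * n) := Nat.sum_range_choose (2 * n)
      _ = 4 ^ n := by rw [pow_mul]; norm_num
  exact h1.trans h2

lemma cauchy_partial_le {a : ℕ → ℝ} (ha : ∀ n, 0 ≤ a n) (N : ℕ) :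
    ∑ n ∈ range N, ∑ p ∈ Finset.HasAntidiagonal.antidiagonal n, a p.1 * a p.2
      ≤ (∑ i ∈ range N, a i) ^ 2 := by
  have hdisj : (↑(range N) : Set ℕ).PairwiseDisjoint Finset.HasAntidiagonal.antidiagonal := by
    intro m _ n _ hmn
    simp only [Function.onFun, Finset.disjoint_left]
    rintro ⟨i, j⟩ h1 h2
    simp only [Finset.HasAntidiagonal.mem_antidiagonal] at h1 h2
    omega
  rw [← Finset.sum_biUnion hdisj]
  have hsub : (range N).biUnion Finset.HasAntidiagonal.antidiagonal ⊆ range N ×ˢ range N := by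
    intro p hp
    simp only [Finset.mem_biUnion, Finset.mem_range, Finset.HasAntidiagonal.mem_antidiagonal] at hp
    obtain ⟨n, hn, hpn⟩ := hp
    simp only [Finset.mem_product, Finset.mem_range]
    omega
  calc ∑ p ∈ (range N).biUnion Finset.HasAntidiagonal.antidiagonal, a p.1 * a p.2
      ≤ ∑ p ∈ range N ×ˢ range N, a p.1 * a p.2 := by
        apply Finset.sum_le_sum_of_subset_of_nonneg hsub
        intro p _ _
        exact mul_nonneg (ha _) (ha _)
    _ = (∑ i ∈ range N, a i) ^ 2 := by
        rw [sq, Finset.sum_mul_sum, ← Finset.sum_product']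

/-- For `0 < x < 1/4`, the generating function of the Catalan numbers converges and
equals `(1 - √(1 - 4x)) / (2x)`. -/
theorem catalan_generating_function (x : ℝ) (hx0 : 0 < x) (hx : x < 1 / 4) :
    HasSum (fun n : ℕ => (catalan n : ℝ) * x ^ n)
      ((1 - Real.sqrt (1 - 4 * x)) / (2 * x)) := by
  set f : ℕ → ℝ := fun n => (catalan n : ℝ) * x ^ n with hf
  have hfnn : ∀ n, 0 ≤ f n := fun n =>
    mul_nonneg (Nat.cast_nonneg _) (pow_nonneg hx0.le _)
  have hfle : ∀ n, f n ≤ (4 * x) ^ n := by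
    intro n
    have : (catalan n : ℝ) ≤ 4 ^ n := by
      exact_mod_cast (catalan_le_four_pow n)
    calc f n ≤ (4 : ℝ) ^ n * x ^ n := by
          apply mul_le_mul_of_nonneg_right this (pow_nonneg hx0.le _)
      _ = (4 * x) ^ n := (mul_pow _ _ _).symm
  have h4x : 4 * x < 1 := by linarith
  have h4x0 : (0:ℝ) ≤ 4 * x := by linarith
  have hs : Summable f :=
    Summable.of_nonneg_of_le hfnn hfle
      (summable_geometric_of_lt_one h4x0 h4x)
  -- constants
  have hD : 0 < 1 - 4 * x := by linarith
  set s := Real.sqrt (1 - 4 * x) with hsdef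
  have hs0 : 0 < s := Real.sqrt_pos.mpr hD
  have hs1 : s < 1 := by
    have h2 : s ^ 2 < 1 := by
      rw [hsdef, Real.sq_sqrt hD.le]; linarith
    nlinarith
  have hssq : s ^ 2 = 1 - 4 * x := Real.sq_sqrt hD.le
  set r := (1 - s) / (2 * x) with hrdef
  have hr0 : 0 < r := div_pos (by linarith) (by linarith)
  have hkey : x * r ^ 2 = r - 1 := by
    rw [hrdef]
    field_simp
    nlinarith [hssq]
  -- partial sums bounded by r
  have hpart : ∀ N, ∑ n ∈ range N, f n ≤ r := by
    intro N
    induction N with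
    | zero => simpa using hr0.le
    | succ N ih =>
      rw [Finset.sum_range_succ']
      have hstep : ∀ n, f (n + 1) =
          x * ∑ p ∈ Finset.HasAntidiagonal.antidiagonal n, f p.1 * f p.2 := by
        intro n
        rw [hf]
        simp only
        rw [catalan_succ']
        push_cast
        rw [Finset.sum_mul, Finset.mul_sum]
        apply Finset.sum_congr rfl
        rintro ⟨i, j⟩ hij
        simp only [Finset.HasAntidiagonal.mem_antidiagonal] at hij
        rw [← hij]
        ring
      have h1 : ∑ n ∈ range N, f (n + 1)
          = x * ∑ n ∈ range N, ∑ p ∈ Finset.HasAntidiagonal.antidiagonal n, f p.1 * f p.2 := by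
        rw [Finset.mul_sum]
        exact Finset.sum_congr rfl fun n _ => hstep n
      have h2 : ∑ n ∈ range N, ∑ p ∈ Finset.HasAntidiagonal.antidiagonal n, f p.1 * f p.2
          ≤ (∑ i ∈ range N, f i) ^ 2 := cauchy_partial_le hfnn N
      have h3 : (∑ i ∈ range N, f i) ^ 2 ≤ r ^ 2 := by
        apply pow_le_pow_left₀ (Finset.sum_nonneg fun i _ => hfnn i) ih
      have hf0 : f 0 = 1 := by simp [hf]
      calc ∑ n ∈ range N, f (n + 1) + f 0
          ≤ x * r ^ 2 + 1 := by
            rw [h1, hf0]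
            have := mul_le_mul_of_nonneg_left (h2.trans h3) hx0.le
            linarith
        _ = r := by rw [hkey]; ring
  -- the sum L
  set L := ∑' n, f n with hL
  have hLle : L ≤ r := Real.tsum_le_of_sum_range_le hfnn hpart
  -- Cauchy product equation
  have hnorm : Summable fun n => ‖f n‖ := by
    simpa [Real.norm_of_nonneg (hfnn _)] using hs
  have hcauchy : L * L = ∑' n, ∑ p ∈ Finset.HasAntidiagonal.antidiagonal n, f p.1 * f p.2 :=
    tsum_mul_tsum_eq_tsum_sum_antidiagonal_of_summable_norm hnorm hnorm
  have hshift : L = 1 + x * (L * L) := by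
    rw [hcauchy]
    have hsum1 : Summable fun n => f (n + 1) := hs.comp_injective (add_left_injective 1)
    have : L = f 0 + ∑' n, f (n + 1) := hs.tsum_eq_zero_add
    rw [this]
    have hf0 : f 0 = 1 := by simp [hf]
    rw [hf0]
    congr 1
    rw [← tsum_mul_left]
    apply tsum_congr
    intro n
    have := (fun n => (rfl : f (n+1) = f (n+1)))
    -- f (n+1) = x * ∑ antidiagonal ...
    rw [hf]
    simp only
    rw [catalan_succ']
    push_cast
    rw [Finset.sum_mul, Finset.mul_sum]
    apply Finset.sum_congr rfl
    rintro ⟨i, j⟩ hij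
    simp only [Finset.HasAntidiagonal.mem_antidiagonal] at hij
    rw [← hij]
    ring
  -- L is a root of x t^2 - t + 1 = 0; roots are r and r' = (1+s)/(2x); L ≤ r < r'
  have hLroot : x * L ^ 2 - L + 1 = 0 := by rw [sq]; linarith [hshift]
  have hr2 : 2 * x * r < 1 := by
    have h2 : 2 * x * r = 1 - s := by rw [hrdef]; field_simp
    rw [h2]; linarith
  have hcase : (L - r) * (x * (L + r) - 1) = 0 := by linear_combination hLroot - hkey
  have hLeq : L = r := by
    rcases mul_eq_zero.mp hcase with h | h
    · linarith [sub_eq_zero.mp h]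
    · exfalso
      have hxL : x * L ≤ x * r := mul_le_mul_of_nonneg_left hLle hx0.le
      nlinarith
  rw [← hLeq]
  exact hs.hasSum
end

section
/- For every real number z with 0 < z < 1/4, with T(z) = (1 − √(1 − 4z))/(2z) and B(z) = z·T(z), one has T(z)²·B(z)² < 1 and the generating function of double trees of type ■–■ satisfies B(z)²/(1 − T(z)²·B(z)²) = (1/16)(1 − 4z)^{−1/2} − (1/8)(1 − 4z)^{1/2} + (1/16)(1 − 4z)^{3/2}. -/
/-- For `0 < z < 1/4`, with `T(z) = (1 - √(1-4z))/(2z)` and `B(z) = z·T(z)`, one has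
`T²B² < 1` and the generating function of double trees of type ■–■ satisfies
`B²/(1 - T²B²) = (1/16)(1-4z)^{-1/2} - (1/8)(1-4z)^{1/2} + (1/16)(1-4z)^{3/2}`. -/
theorem double_tree_gf_black_black (z : ℝ) (hz0 : 0 < z) (hz : z < 1 / 4) :
    let T := (1 - Real.sqrt (1 - 4 * z)) / (2 * z)
    let B := z * T
    T ^ 2 * B ^ 2 < 1 ∧
      B ^ 2 / (1 - T ^ 2 * B ^ 2) =
        1 / 16 * (1 - 4 * z) ^ (-(1 / 2) : ℝ) - 1 / 8 * (1 - 4 * z) ^ ((1 / 2) : ℝ)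
          + 1 / 16 * (1 - 4 * z) ^ ((3 / 2) : ℝ) := by
  have h1 : (0:ℝ) < 1 - 4 * z := by linarith
  set s := Real.sqrt (1 - 4 * z) with hs_def
  have hs : s ^ 2 = 1 - 4 * z := Real.sq_sqrt h1.le
  have hs0 : 0 < s := Real.sqrt_pos.2 h1
  have hs1 : s < 1 := by nlinarith
  intro T B
  have hT : T = 2 / (1 + s) := by
    show (1 - s) / (2 * z) = 2 / (1 + s)
    rw [div_eq_div_iff (by positivity) (by positivity)]
    linear_combination -hs
  have hB : B = (1 - s) / 2 := by
    show z * ((1 - s) / (2 * z)) = (1 - s) / 2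
    field_simp
  have hden : 1 - T ^ 2 * B ^ 2 = 4 * s / (1 + s) ^ 2 := by
    rw [hT, hB]
    field_simp
    ring
  constructor
  · rw [hT, hB, div_pow, div_pow, div_mul_div_comm, div_lt_one (by positivity)]
    nlinarith
  · have hr1 : (1 - 4 * z) ^ ((1/2 : ℝ)) = s := by
      rw [hs_def, Real.sqrt_eq_rpow]
    have hr2 : (1 - 4 * z) ^ (-(1/2) : ℝ) = s⁻¹ := by
      rw [Real.rpow_neg h1.le, hr1]
    have hr3 : (1 - 4 * z) ^ ((3/2 : ℝ)) = s ^ 3 := by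
      have : (1 - 4 * z) ^ ((3/2 : ℝ)) = ((1 - 4 * z) ^ ((1/2 : ℝ))) ^ (3 : ℕ) := by
        rw [← Real.rpow_natCast ((1 - 4 * z) ^ ((1/2 : ℝ))) 3, ← Real.rpow_mul h1.le]
        norm_num
      rw [this, hr1]
    rw [hden, hB, hr1, hr2, hr3]
    field_simp
    ring
end
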